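/- Let R be a Bézout domain and 0 ≠ c ∈ R such that R/cR is clean. Then for all a,b ∈ R with aR + bR = R there exist r,s ∈ R such that c = rs, rR + sR = R, rR + aR = R, and sR + bR = R. -/

import Mathlib

/-- A commutative ring has stable range 1. -/
def HasStableRange1 (R : Type*) [CommRing R] : Prop :=
  ∀ a b : R, Ideal.span {a} ⊔ Ideal.span {b} = ⊤ → ∃ y : R, IsUnit (a + b * y)

/-- An element `a` is stable if `R/aR` has stable range 1. -/
def IsStableElem {R : Type*} [CommRing R] (a : R) : Prop :=
  HasStableRange1 (R ⧸ Ideal.span {a})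

/-- A commutative ring is locally stable. -/
def LocallyStable (R : Type*) [CommRing R] : Prop :=
  ∀ a b : R, Ideal.span {a} ⊔ Ideal.span {b} = ⊤ →
    ∃ y : R, HasStableRange1 (R ⧸ Ideal.span {a + b * y})

/-- A clean ring: every element is the sum of an idempotent and a unit. -/
def IsCleanRing (R : Type*) [CommRing R] : Prop :=
  ∀ a : R, ∃ e u : R, IsIdempotentElem e ∧ IsUnit u ∧ a = e + u

/-- A ring has neat range 1. -/
def NeatRange1 (R : Type*) [CommRing R] : Prop :=
  ∀ a b : R, Ideal.span {a} ⊔ Ideal.span {b} = ⊤ →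
    ∃ y : R, IsCleanRing (R ⧸ Ideal.span {a + b * y})

/-- A ring has almost stable range 1: every proper homomorphic image has stable range 1. -/
def AlmostStableRange1 (R : Type*) [CommRing R] : Prop :=
  ∀ I : Ideal R, I ≠ ⊥ → HasStableRange1 (R ⧸ I)

/-- An elementary divisor ring: every rectangular matrix admits diagonal reduction. -/
def ElementaryDivisorRing (R : Type*) [CommRing R] : Prop :=
  ∀ (m n : ℕ) (A : Matrix (Fin m) (Fin n) R),
    ∃ (P : Matrix (Fin m) (Fin m) R) (Q : Matrix (Fin n) (Fin n) R),
      IsUnit P ∧ IsUnit Q ∧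
      (∀ (i : Fin m) (j : Fin n), (i : ℕ) ≠ (j : ℕ) → (P * A * Q) i j = 0) ∧
      (∀ (i i' : Fin m) (j j' : Fin n), (i : ℕ) = (j : ℕ) → (i' : ℕ) = (j' : ℕ) →
        (i' : ℕ) = (i : ℕ) + 1 → (P * A * Q) i j ∣ (P * A * Q) i' j')

/-- A ring is strongly completable. -/
def StronglyCompletable (R : Type*) [CommRing R] : Prop :=
  ∀ (n : ℕ) (hn : 0 < n) (a : Fin n → R) (d : R),
    (⨆ i, Ideal.span {a i}) = Ideal.span {d} →
    ∃ A : Matrix (Fin n) (Fin n) R, (∀ j, A ⟨0, hn⟩ j = a j) ∧ A.det = d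

theorem stmt10 (R : Type*) [CommRing R] [IsDomain R] [IsBezout R] (c : R) (hc : c ≠ 0)
    (h : IsCleanRing (R ⧸ Ideal.span {c})) :
    ∀ a b : R, Ideal.span {a} ⊔ Ideal.span {b} = ⊤ →
      ∃ r s : R, c = r * s ∧ Ideal.span {r} ⊔ Ideal.span {s} = ⊤ ∧
        Ideal.span {r} ⊔ Ideal.span {a} = ⊤ ∧ Ideal.span {s} ⊔ Ideal.span {b} = ⊤ := by
  intro a b hab
  have hab' : IsCoprime a b := by
    rwa [← Ideal.isCoprime_span_singleton_iff, Ideal.isCoprime_iff_sup_eq]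
  obtain ⟨p, q, hpq⟩ := hab'
  obtain ⟨ebar, ubar, he, hu, heq⟩ := h (Ideal.Quotient.mk _ (p * a))
  obtain ⟨e, rfl⟩ := Ideal.Quotient.mk_surjective ebar
  obtain ⟨u, rfl⟩ := Ideal.Quotient.mk_surjective ubar
  have hce : c ∣ e * e - e := by
    have := he
    rw [IsIdempotentElem, ← map_mul, Ideal.Quotient.eq] at this
    rwa [← Ideal.mem_span_singleton]
  obtain ⟨vbar, hv⟩ := isUnit_iff_exists_inv.mp hu
  obtain ⟨v, rfl⟩ := Ideal.Quotient.mk_surjective vbar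
  have hcu : c ∣ u * v - 1 := by
    rw [← map_mul, show (1 : R ⧸ Ideal.span {c}) = Ideal.Quotient.mk _ 1 from rfl,
      Ideal.Quotient.eq] at hv
    rwa [← Ideal.mem_span_singleton]
  have hca : c ∣ p * a - e - u := by
    rw [← map_add, Ideal.Quotient.eq] at heq
    rw [← Ideal.mem_span_singleton]
    convert heq using 1; ring
  set r := IsBezout.gcd c e with hr
  set s := IsBezout.gcd c (1 - e) with hs
  have hrc : r ∣ c := IsBezout.gcd_dvd_left c e
  have hre : r ∣ e := IsBezout.gcd_dvd_right c e
  have hsc : s ∣ c := IsBezout.gcd_dvd_left c (1 - e)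
  have hse : s ∣ 1 - e := IsBezout.gcd_dvd_right c (1 - e)
  obtain ⟨m1, m2, hm⟩ := IsBezout.gcd_eq_sum c e
  obtain ⟨n1, n2, hn⟩ := IsBezout.gcd_eq_sum c (1 - e)
  rw [← hr] at hm
  rw [← hs] at hn
  -- r and s coprime
  obtain ⟨e', he'⟩ := id hre
  obtain ⟨f', hf'⟩ := id hse
  have hrs : IsCoprime r s := ⟨e', f', by linear_combination -he' - hf'⟩
  -- c ∣ r*s
  have hcrs : c ∣ r * s := by
    have h1 : c ∣ e * (1 - e) := by
      obtain ⟨k, hk⟩ := hce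
      exact ⟨-k, by linear_combination -hk⟩
    have : r * s = c * (m1 * n1 * c + m1 * n2 * (1 - e) + m2 * e * n1) +
        (e * (1 - e)) * (m2 * n2) := by linear_combination (-(n1 * c + n2 * (1 - e))) * hm - r * hn
    rw [this]
    exact dvd_add (dvd_mul_right _ _) (h1.mul_right _)
  have hrsc : r * s ∣ c := hrs.mul_dvd hrc hsc
  -- associated
  obtain ⟨k, hk⟩ := hcrs
  obtain ⟨t, ht⟩ := hrsc
  have hrs0 : r * s ≠ 0 := fun h0 => hc (by rw [ht, h0, zero_mul])
  have htk : t * k = 1 := by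
    have : r * s * (t * k) = r * s * 1 := by rw [mul_one, ← mul_assoc, ← ht, ← hk]
    exact mul_left_cancel₀ hrs0 this
  -- coprimality with a : IsCoprime r a
  have hra : IsCoprime r a := by
    rw [← isRelPrime_iff_isCoprime]
    intro d hdr hda
    have hdc : d ∣ c := hdr.trans hrc
    have hde : d ∣ e := hdr.trans hre
    have hdu : d ∣ u := by
      have : u = p * a - e - (p * a - e - u) := by ring
      rw [this]
      exact ((hda.mul_left p).sub hde).sub (hdc.trans hca)
    have : d ∣ (1 : R) := by
      have : (1 : R) = u * v - (u * v - 1) := by ring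
      rw [this]
      exact (hdu.mul_right v).sub (hdc.trans hcu)
    exact isUnit_of_dvd_one this
  have hsb : IsCoprime s b := by
    rw [← isRelPrime_iff_isCoprime]
    intro d hds hdb
    have hdc : d ∣ c := hds.trans hsc
    have hde : d ∣ 1 - e := hds.trans hse
    have hdu : d ∣ u := by
      have hu2 : u = (1 - e) - q * b - (p * a - e - u) + (p * a + q * b - 1) := by ring
      rw [hu2, hpq]
      simpa using (hde.sub (hdb.mul_left q)).sub (hdc.trans hca)
    have : d ∣ (1 : R) := by
      have h1 : (1 : R) = u * v - (u * v - 1) := by ring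
      rw [h1]
      exact (hdu.mul_right v).sub (hdc.trans hcu)
    exact isUnit_of_dvd_one this
  -- final assembly
  have htu : IsUnit t := isUnit_iff_exists_inv.mpr ⟨k, htk⟩
  obtain ⟨t', htt'⟩ := isUnit_iff_exists_inv.mp htu
  have hrt : IsCoprime r t := ⟨0, t', by rw [mul_comm t' t, htt']; ring⟩
  have htb : IsCoprime t b := ⟨t', 0, by rw [mul_comm t' t, htt']; ring⟩
  have tospan : ∀ x y : R, IsCoprime x y → Ideal.span {x} ⊔ Ideal.span {y} = ⊤ :=
    fun x y hxy => Ideal.isCoprime_iff_sup_eq.mp ((Ideal.isCoprime_span_singleton_iff x y).mpr hxy)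
  exact ⟨r, s * t, by rw [ht, mul_assoc], tospan _ _ (hrs.mul_right hrt),
    tospan _ _ hra, tospan _ _ (hsb.mul_left htb)⟩
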